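/- Let m ≥ 1 and let R be a ring satisfying the Lie nilpotency identity [[[...[[x_1,x_2],x_3],...],x_m],x_{m+1}] = 0 (where [x,y] = xy − yx), and suppose every nonzero integer (i.e. every element k·1 with k ∈ ℤ \ {0}) is a unit in R. Let n ≥ 1 and let S be a subring of M_n(R) containing all scalar matrices rI with r ∈ R. Then S ∩ U(M_n(R)) = U(S); that is, every matrix in S invertible in M_n(R) has its inverse in S. -/

import Mathlib

/-- The left-normed iterated commutator: `leftNormedComm 0 x = x 0` and
`leftNormedComm (k+1) x = [leftNormedComm k x, x (k+1)]`, where `[a,b] = a*b - b*a`.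
Thus `leftNormedComm m x = [[[⋯[[x 0, x 1], x 2]⋯], x (m-1)], x m]` involves `m + 1`
variables. -/
def leftNormedComm {R : Type*} [Ring R] : ℕ → (ℕ → R) → R
  | 0, x => x 0
  | k + 1, x => leftNormedComm k x * x (k + 1) - x (k + 1) * leftNormedComm k x

set_option linter.unusedSectionVars false

namespace Stmt8Aux

variable {R : Type*} [Ring R]

/-- Commutator. -/
def cm (a b : R) : R := a * b - b * a

/-- Iterated right-bracketing: `dIter [b₁,…,bₖ] x = [[…[x,b₁]…],bₖ]`. -/
def dIter : List R → R → R
  | [], x => x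
  | b :: l, x => dIter l (cm x b)

@[simp] lemma dIter_nil (x : R) : dIter [] x = x := rfl
@[simp] lemma dIter_cons (b : R) (l : List R) (x : R) :
    dIter (b :: l) x = dIter l (cm x b) := rfl

lemma dIter_append (l1 l2 : List R) (x : R) :
    dIter (l1 ++ l2) x = dIter l2 (dIter l1 x) := by
  induction l1 generalizing x with
  | nil => rfl
  | cons b t ih => simp [dIter, ih]

lemma dIter_concat (l : List R) (b x : R) :
    dIter (l ++ [b]) x = cm (dIter l x) b := by
  rw [dIter_append]; rfl

@[simp] lemma cm_zero_left (b : R) : cm 0 b = 0 := by simp [cm]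

lemma dIter_zero (l : List R) : dIter l (0 : R) = 0 := by
  induction l with
  | nil => rfl
  | cons b t ih => simp [dIter, ih]

lemma lnc_eq_dIter (k : ℕ) (x : ℕ → R) :
    leftNormedComm k x = dIter ((List.range k).map fun i => x (i + 1)) (x 0) := by
  induction k with
  | zero => rfl
  | succ k ih =>
      rw [List.range_succ, List.map_append]
      show leftNormedComm k x * x (k+1) - x (k+1) * leftNormedComm k x = _
      rw [List.map_singleton, dIter_concat, ih]; rfl

lemma range_map_getD (l : List R) :
    (List.range l.length).map (fun i => l.getD i 0) = l := by
  apply List.ext_getElem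
  · simp
  · intro i h1 h2
    simp [List.getD_eq_getElem?_getD, List.getElem?_eq_getElem h2]

/-- All `m`-fold iterated brackets vanish. -/
lemma dIter_eq_zero {m : ℕ} (hLie : ∀ x : ℕ → R, leftNormedComm m x = 0)
    (l : List R) (x : R) (h : m ≤ l.length) : dIter l x = 0 := by
  have exact_case : ∀ (l : List R) (x : R), l.length = m → dIter l x = 0 := by
    intro l x hl
    set f : ℕ → R := fun i => if i = 0 then x else l.getD (i - 1) 0 with hf
    have h1 : leftNormedComm m f = dIter l x := by
      rw [lnc_eq_dIter]
      have : ((List.range m).map fun i => f (i + 1)) = l := by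
        have : (fun i => f (i + 1)) = fun i => l.getD i 0 := by
          funext i; simp [hf]
        rw [this, ← hl, range_map_getD]
      rw [this]; simp [hf]
    rw [← h1, hLie]
  rw [← List.take_append_drop m l, dIter_append,
    exact_case (List.take m l) x (by rw [List.length_take]; omega), dIter_zero]

/-! ### Bracket monomials (trees) -/

inductive LT (R : Type*) : Type _ where
  | leaf : R → LT R
  | node : LT R → LT R → LT R

namespace LT

def val : LT R → R
  | leaf r => r
  | node A B => cm A.val B.val

def wt : LT R → ℕ
  | leaf _ => 1
  | node A B => A.wt + B.wt

lemma wt_pos (t : LT R) : 1 ≤ t.wt := by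
  induction t with
  | leaf r => exact le_rfl
  | node A B ihA ihB => show 1 ≤ A.wt + B.wt; omega

end LT

/-- Left-combs. -/
def lcomb (x : R) (l : List R) : LT R :=
  l.foldl (fun t b => .node t (.leaf b)) (.leaf x)

lemma lcomb_val_aux (l : List R) (t : LT R) :
    (l.foldl (fun t b => LT.node t (.leaf b)) t).val = dIter l t.val := by
  induction l generalizing t with
  | nil => rfl
  | cons b tl ih => simp [List.foldl_cons, ih, dIter, LT.val, cm]

lemma lcomb_val (x : R) (l : List R) : (lcomb x l).val = dIter l x :=
  lcomb_val_aux l _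

lemma lcomb_wt_aux (l : List R) (t : LT R) :
    (l.foldl (fun t b => LT.node t (.leaf b)) t).wt = t.wt + l.length := by
  induction l generalizing t with
  | nil => simp
  | cons b tl ih => simp [List.foldl_cons, ih, LT.wt]; omega

lemma lcomb_wt (x : R) (l : List R) : (lcomb x l).wt = l.length + 1 := by
  rw [lcomb, lcomb_wt_aux]; simp [LT.wt]; omega

/-- Left-normed values of weight `w`. -/
def LS (R : Type*) [Ring R] (w : ℕ) : Set R :=
  {z | ∃ (l : List R) (x : R), l.length + 1 = w ∧ z = dIter l x}

lemma jacobi (a b c : R) : cm a (cm b c) = cm (cm a b) c - cm (cm a c) b := by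
  simp only [cm]; noncomm_ring

lemma cm_add_left (a a' b : R) : cm (a + a') b = cm a b + cm a' b := by
  simp only [cm]; noncomm_ring

lemma cm_neg_left (a b : R) : cm (-a) b = -cm a b := by
  simp only [cm]; noncomm_ring

lemma key_reduct : ∀ (k : ℕ) (B : LT R), B.wt ≤ k → ∀ A : LT R,
    A.val ∈ AddSubgroup.closure (LS R A.wt) →
    cm A.val B.val ∈ AddSubgroup.closure (LS R (A.wt + B.wt)) := by
  intro k
  induction k with
  | zero => intro B hB; exact absurd (le_trans B.wt_pos hB) (by omega)
  | succ k ih =>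
    intro B hB A hA
    cases B with
    | leaf b =>
        show cm A.val b ∈ AddSubgroup.closure (LS R (A.wt + 1))
        refine AddSubgroup.closure_induction
          (p := fun z _ => cm z b ∈ AddSubgroup.closure (LS R (A.wt + 1)))
          ?_ ?_ ?_ ?_ hA
        · rintro z ⟨l, x, hl, rfl⟩
          refine AddSubgroup.subset_closure ⟨l ++ [b], x, ?_, (dIter_concat l b x).symm⟩
          simp; omega
        · simpa using (AddSubgroup.zero_mem _)
        · intro z w _ _ ihz ihw; rw [cm_add_left]; exact add_mem ihz ihw
        · intro z _ ihz; rw [cm_neg_left]; exact neg_mem ihz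
    | node B1 B2 =>
        have hw1 : B1.wt ≤ k := by
          have := B1.wt_pos; have := B2.wt_pos
          have : B1.wt + B2.wt ≤ k + 1 := hB
          omega
        have hw2 : B2.wt ≤ k := by
          have := B1.wt_pos; have := B2.wt_pos
          have : B1.wt + B2.wt ≤ k + 1 := hB
          omega
        have h1 : (LT.node A B1).val ∈ AddSubgroup.closure (LS R (LT.node A B1).wt) :=
          ih B1 hw1 A hA
        have h2 := ih B2 hw2 (LT.node A B1) h1
        have h1' : (LT.node A B2).val ∈ AddSubgroup.closure (LS R (LT.node A B2).wt) :=
          ih B2 hw2 A hA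
        have h3 := ih B1 hw1 (LT.node A B2) h1'
        show cm A.val (cm B1.val B2.val) ∈ _
        rw [jacobi]
        have e2 : (LT.node A B1).wt + B2.wt = A.wt + (LT.node B1 B2).wt := by
          show A.wt + B1.wt + B2.wt = A.wt + (B1.wt + B2.wt); omega
        have e3 : (LT.node A B2).wt + B1.wt = A.wt + (LT.node B1 B2).wt := by
          show A.wt + B2.wt + B1.wt = A.wt + (B1.wt + B2.wt); omega
        rw [e2] at h2; rw [e3] at h3
        exact sub_mem h2 h3

lemma valmem (t : LT R) : t.val ∈ AddSubgroup.closure (LS R t.wt) := by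
  induction t with
  | leaf r => exact AddSubgroup.subset_closure ⟨[], r, rfl, rfl⟩
  | node A B ihA ihB => exact key_reduct B.wt B le_rfl A ihA

/-- Any bracket monomial of weight `> m` vanishes. -/
lemma val_eq_zero {m : ℕ} (hLie : ∀ x : ℕ → R, leftNormedComm m x = 0)
    (t : LT R) (ht : m + 1 ≤ t.wt) : t.val = 0 := by
  have h0 : LS R t.wt ⊆ (⊥ : AddSubgroup R) := by
    rintro z ⟨l, x, hl, rfl⟩
    have : m ≤ l.length := by omega
    simpa using dIter_eq_zero hLie l x this
  have := (AddSubgroup.closure_le ⊥).2 h0 (valmem t)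
  simpa using this

/-- Weight-`m` monomial values are central. -/
lemma val_central {m : ℕ} (hLie : ∀ x : ℕ → R, leftNormedComm m x = 0)
    (t : LT R) (ht : t.wt = m) (r : R) : t.val * r = r * t.val := by
  have := val_eq_zero hLie (LT.node t (.leaf r)) (by simp [LT.wt, ht])
  have : cm t.val r = 0 := this
  exact sub_eq_zero.mp this

lemma sq_aux (hZ2 : IsUnit (2 : R)) (a b : R)
    (h1 : ∀ y : R, cm (cm y b) b = 0) : cm a b * cm a b = 0 := by
  have key : cm (cm (a * a) b) b =
      cm (cm a b) b * a + a * cm (cm a b) b + (cm a b * cm a b + cm a b * cm a b) := by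
    simp only [cm]; noncomm_ring
  rw [h1, h1] at key
  have h2 : (2 : R) * (cm a b * cm a b) = 0 := by
    rw [two_mul]
    have := key.symm
    simpa using this
  exact (hZ2.mul_right_eq_zero).mp h2

/-- Weight-`m` monomial values square to zero. -/
lemma val_sq_zero {m : ℕ} (hLie : ∀ x : ℕ → R, leftNormedComm m x = 0)
    (hZ2 : IsUnit (2 : R)) (A B : LT R) (hw : A.wt + B.wt = m) :
    cm A.val B.val * cm A.val B.val = 0 := by
  rcases le_total A.wt B.wt with h | h
  · refine sq_aux hZ2 A.val B.val (fun y => ?_)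
    exact val_eq_zero hLie (LT.node (LT.node (.leaf y) B) B) (by simp [LT.wt]; omega)
  · have h0 : cm B.val A.val * cm B.val A.val = 0 := by
      refine sq_aux hZ2 B.val A.val (fun y => ?_)
      exact val_eq_zero hLie (LT.node (LT.node (.leaf y) A) A) (by simp [LT.wt]; omega)
    have e : cm A.val B.val = -cm B.val A.val := by rw [cm, cm, neg_sub]
    rw [e, neg_mul_neg]; exact h0



/-! ### CS sets and ideals -/

def CS (R : Type*) [Ring R] (k : ℕ) : Set R :=
  {c | ∃ (l : List R) (x : R), l.length = k ∧ c = dIter l x}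

def genOf (C : Set R) : Set R := {x | ∃ r s c, c ∈ C ∧ x = r * c * s}

def idl (C : Set R) : AddSubgroup R := AddSubgroup.closure (genOf C)

lemma mem_idl_of_mem {C : Set R} {c : R} (hc : c ∈ C) : c ∈ idl C :=
  AddSubgroup.subset_closure ⟨1, 1, c, hc, by simp⟩

lemma idl_mono {C D : Set R} (h : C ⊆ D) : idl C ≤ idl D :=
  AddSubgroup.closure_mono (fun x ⟨r, s, c, hc, hx⟩ => ⟨r, s, c, h hc, hx⟩)

lemma idl_mul_left {C : Set R} (r : R) {x : R} (hx : x ∈ idl C) : r * x ∈ idl C := by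
  refine AddSubgroup.closure_induction
    (p := fun x _ => r * x ∈ idl C) ?_ ?_ ?_ ?_ hx
  · rintro z ⟨r', s', c, hc, rfl⟩
    exact AddSubgroup.subset_closure ⟨r * r', s', c, hc, by noncomm_ring⟩
  · simpa using (idl C).zero_mem
  · intro a b _ _ iha ihb; rw [mul_add]; exact add_mem iha ihb
  · intro a _ iha; rw [mul_neg]; exact neg_mem iha

lemma idl_mul_right {C : Set R} (s : R) {x : R} (hx : x ∈ idl C) : x * s ∈ idl C := by
  refine AddSubgroup.closure_induction
    (p := fun x _ => x * s ∈ idl C) ?_ ?_ ?_ ?_ hx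
  · rintro z ⟨r', s', c, hc, rfl⟩
    exact AddSubgroup.subset_closure ⟨r', s' * s, c, hc, by noncomm_ring⟩
  · simpa using (idl C).zero_mem
  · intro a b _ _ iha ihb; rw [add_mul]; exact add_mem iha ihb
  · intro a _ iha; rw [neg_mul]; exact neg_mem iha

/-- The ring congruence attached to the two-sided ideal `idl C`. -/
def idlCon (C : Set R) : RingCon R where
  r a b := a - b ∈ idl C
  iseqv := ⟨fun a => by simpa using (idl C).zero_mem,
    fun {a b} h => by simpa using neg_mem h,
    fun {a b c} h1 h2 => by simpa using add_mem h1 h2⟩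
  add' := fun {w x y z} h1 h2 => by
    have := add_mem h1 h2
    simpa [sub_add_sub_comm] using this
  mul' := fun {w x y z} h1 h2 => by
    have : w * (y - z) + (w - x) * z ∈ idl C :=
      add_mem (idl_mul_left w h2) (idl_mul_right z h1)
    have e : w * (y - z) + (w - x) * z = w * y - x * z := by noncomm_ring
    rwa [e] at this

lemma idlCon_mk'_eq_zero_iff {C : Set R} (x : R) :
    (idlCon C).mk' x = 0 ↔ x ∈ idl C := by
  show ((x : (idlCon C).Quotient) = ((0 : R) : (idlCon C).Quotient)) ↔ _
  rw [RingCon.eq]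
  show x - 0 ∈ idl C ↔ _
  rw [sub_zero]

lemma idlCon_mk'_surjective {C : Set R} :
    Function.Surjective ((idlCon C).mk') := by
  intro q
  obtain ⟨x, hx⟩ := Quot.exists_rep q
  exact ⟨x, hx⟩

/-! ### transport along ring homs -/

lemma map_cm {S : Type*} [Ring S] (f : R →+* S) (a b : R) : f (cm a b) = cm (f a) (f b) := by
  simp [cm]

lemma map_dIter {S : Type*} [Ring S] (f : R →+* S) (l : List R) (x : R) :
    f (dIter l x) = dIter (l.map f) (f x) := by
  induction l generalizing x with
  | nil => rfl
  | cons b t ih => simp [dIter, ih, map_cm]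

lemma map_lnc {S : Type*} [Ring S] (f : R →+* S) (k : ℕ) (x : ℕ → R) :
    f (leftNormedComm k x) = leftNormedComm k (fun i => f (x i)) := by
  induction k with
  | zero => rfl
  | succ k ih =>
      show f (leftNormedComm k x * x (k+1) - x (k+1) * leftNormedComm k x) = _
      simp [ih]; rfl

/-! ### products of central square-zero elements -/

lemma pool_prod_zero : ∀ (cl : List R) (s : Finset R),
    (∀ z ∈ s, (∀ r : R, z * r = r * z) ∧ z * z = 0) → (∀ c ∈ cl, c ∈ s) →
    s.card < cl.length → cl.prod = 0 := by
  classical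
  intro cl
  induction cl with
  | nil => intro s _ _ h; simp at h
  | cons z t ih =>
    intro s hs hmem hcard
    have hzs : z ∈ s := hmem z (by simp)
    by_cases hz : z ∈ t
    · obtain ⟨t1, t2, rfl⟩ := List.append_of_mem hz
      have hcen := (hs z hzs).1
      have hsq := (hs z hzs).2
      have : (z :: (t1 ++ z :: t2)).prod
          = t1.prod * (z * z) * t2.prod := by
        rw [List.prod_cons, List.prod_append, List.prod_cons]
        rw [← mul_assoc, hcen t1.prod]
        noncomm_ring
      rw [this, hsq]; simp
    · have hthin : ∀ c ∈ t, c ∈ s.erase z := by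
        intro c hc
        exact Finset.mem_erase.2 ⟨fun h => hz (h ▸ hc), hmem c (by simp [hc])⟩
      have hcard' : (s.erase z).card < t.length := by
        rw [Finset.card_erase_of_mem hzs]
        have h1 : s.card < t.length + 1 := by simpa using hcard
        have h2 : 1 ≤ s.card := Finset.card_pos.2 ⟨z, hzs⟩
        omega
      have := ih (s.erase z) (fun w hw => hs w (Finset.mem_of_mem_erase hw)) hthin hcard'
      rw [List.prod_cons, this, mul_zero]

/-! ### block products -/

def Gp (cf : Finset R) (j : ℕ) : AddSubgroup R :=
  AddSubgroup.closure
    {x | ∃ (r : R) (cl : List R), cl.length = j ∧ (∀ c ∈ cl, c ∈ cf) ∧ x = r * cl.prod}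

lemma one_mem_Gp0 (cf : Finset R) : (1 : R) ∈ Gp cf 0 :=
  AddSubgroup.subset_closure ⟨1, [], rfl, by simp, by simp⟩

lemma mul_mem_Gp {cf : Finset R} (hcen : ∀ z ∈ cf, ∀ r : R, z * r = r * z)
    {j : ℕ} {a y : R} (ha : a ∈ idl (↑cf : Set R)) (hy : y ∈ Gp cf j) :
    a * y ∈ Gp cf (j + 1) := by
  refine AddSubgroup.closure_induction
    (p := fun a _ => ∀ y ∈ Gp cf j, a * y ∈ Gp cf (j+1)) ?_ ?_ ?_ ?_ ha y hy
  · rintro z ⟨r, s, c, hc, rfl⟩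
    intro y hy
    refine AddSubgroup.closure_induction
      (p := fun y _ => (r * c * s) * y ∈ Gp cf (j+1)) ?_ ?_ ?_ ?_ hy
    · rintro w ⟨r', cl, hlen, hmem, rfl⟩
      have hc' := hcen c hc (s * r')
      have key : (r * c * s) * (r' * cl.prod) = (r * (s * r')) * (c :: cl).prod := by
        rw [List.prod_cons]
        calc r * c * s * (r' * cl.prod) = r * (c * (s * r')) * cl.prod := by noncomm_ring
          _ = r * ((s * r') * c) * cl.prod := by rw [hc']
          _ = r * (s * r') * (c * cl.prod) := by noncomm_ring
      rw [key]
      have hmem' : ∀ d ∈ (c :: cl), d ∈ cf := by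
        intro d hd
        rcases List.mem_cons.1 hd with h | h
        · exact h ▸ hc
        · exact hmem d h
      exact AddSubgroup.subset_closure ⟨r * (s * r'), c :: cl, by simp [hlen], hmem', rfl⟩
    · show (r * c * s) * 0 ∈ Gp cf (j+1)
      rw [mul_zero]; exact (Gp cf (j+1)).zero_mem
    · intro u v _ _ ihu ihv
      show (r * c * s) * (u + v) ∈ Gp cf (j+1)
      rw [mul_add]; exact add_mem ihu ihv
    · intro u _ ihu
      show (r * c * s) * (-u) ∈ Gp cf (j+1)
      rw [mul_neg]; exact neg_mem ihu
  · intro y hy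
    show (0 : R) * y ∈ Gp cf (j+1)
    rw [zero_mul]; exact (Gp cf (j+1)).zero_mem
  · intro u v _ _ ihu ihv y hy
    show (u + v) * y ∈ Gp cf (j+1)
    rw [add_mul]; exact add_mem (ihu y hy) (ihv y hy)
  · intro u _ ihu y hy
    show (-u) * y ∈ Gp cf (j+1)
    rw [neg_mul]; exact neg_mem (ihu y hy)

lemma prod_mem_Gp {cf : Finset R} (hcen : ∀ z ∈ cf, ∀ r : R, z * r = r * z)
    (qs : List R) (hqs : ∀ q ∈ qs, q ∈ idl (↑cf : Set R)) :
    qs.prod ∈ Gp cf qs.length := by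
  induction qs with
  | nil => exact one_mem_Gp0 cf
  | cons q t ih =>
      rw [List.prod_cons]
      exact mul_mem_Gp hcen (hqs q (by simp))
        (ih (fun w hw => hqs w (by simp [hw])))

lemma Gp_eq_zero {cf : Finset R} (hcen : ∀ z ∈ cf, (∀ r : R, z * r = r * z) ∧ z * z = 0)
    {j : ℕ} (hj : cf.card < j) {x : R} (hx : x ∈ Gp cf j) : x = 0 := by
  have h0 : {x : R | ∃ (r : R) (cl : List R), cl.length = j ∧ (∀ c ∈ cl, c ∈ cf) ∧ x = r * cl.prod}
      ⊆ (⊥ : AddSubgroup R) := by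
    rintro x ⟨r, cl, hlen, hmem, rfl⟩
    have : cl.prod = 0 := pool_prod_zero cl cf hcen hmem (by omega)
    simp [this]
  simpa using (AddSubgroup.closure_le ⊥).2 h0 hx

lemma exists_finpool {C : Set R} {q : R} (hq : q ∈ idl C) :
    ∃ cf : Finset R, (↑cf : Set R) ⊆ C ∧ q ∈ idl (↑cf : Set R) := by
  classical
  refine AddSubgroup.closure_induction
    (p := fun q _ => ∃ cf : Finset R, (↑cf : Set R) ⊆ C ∧ q ∈ idl (↑cf : Set R)) ?_ ?_ ?_ ?_ hq
  · rintro z ⟨r, s, c, hc, rfl⟩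
    exact ⟨{c}, by simpa using hc,
      AddSubgroup.subset_closure ⟨r, s, c, by simp, rfl⟩⟩
  · exact ⟨∅, by simp, (idl _).zero_mem⟩
  · rintro a b _ _ ⟨cfa, hca, hma⟩ ⟨cfb, hcb, hmb⟩
    refine ⟨cfa ∪ cfb, ?_, add_mem ?_ ?_⟩
    · intro x hx
      rcases Finset.mem_union.1 hx with h | h
      · exact hca h
      · exact hcb h
    · exact idl_mono (by intro x hx; simp [hx]) hma
    · exact idl_mono (by intro x hx; simp [hx]) hmb
  · rintro a _ ⟨cfa, hca, hma⟩
    exact ⟨cfa, hca, neg_mem hma⟩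


lemma mem_idl_CS_map {S : Type*} [Ring S] (f : R →+* S) (k : ℕ) {x : R}
    (h : x ∈ idl (CS R k)) : f x ∈ idl (CS S k) := by
  refine AddSubgroup.closure_induction
    (p := fun x _ => f x ∈ idl (CS S k)) ?_ ?_ ?_ ?_ h
  · rintro z ⟨r, s, c, ⟨l, y, hl, rfl⟩, rfl⟩
    refine AddSubgroup.subset_closure ⟨f r, f s, f (dIter l y), ⟨l.map f, f y, by simp [hl],
      (map_dIter f l y)⟩, by simp⟩
  · simp only [map_zero]; exact (idl _).zero_mem
  · intro a b _ _ iha ihb; rw [map_add]; exact add_mem iha ihb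
  · intro a _ iha; rw [map_neg]; exact neg_mem iha

lemma list_eq_ofFn {F : Finset R} : ∀ (N : ℕ) (l : List R), l.length = N →
    (∀ x ∈ l, x ∈ F) →
    ∃ f : Fin N → {x // x ∈ F}, (List.ofFn fun i => ((f i : R))) = l := by
  intro N
  induction N with
  | zero =>
      intro l hl _
      exact ⟨nofun, by simpa using (List.length_eq_zero_iff.1 hl).symm⟩
  | succ N ih =>
      intro l hl hmem
      cases l with
      | nil => simp at hl
      | cons a t =>
          have ht : t.length = N := by simpa using hl
          obtain ⟨g, hg⟩ := ih t ht (fun x hx => hmem x (by simp [hx]))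
          refine ⟨Fin.cons ⟨a, hmem a (by simp)⟩ g, ?_⟩
          rw [List.ofFn_succ]
          simp [hg]

universe u

theorem keyP (m : ℕ) : ∀ (R : Type u) [Ring R],
    (∀ x : ℕ → R, leftNormedComm m x = 0) →
    (∀ k : ℤ, k ≠ 0 → IsUnit ((k : R))) →
    ∀ F : Finset R, (∀ x ∈ F, x ∈ idl (CS R 1)) →
    ∃ K, 0 < K ∧ ∀ l : List R, l.length = K → (∀ x ∈ l, x ∈ F) → l.prod = 0 := by
  induction m with
  | zero =>
      intro R _ hLie _ F _
      refine ⟨1, one_pos, ?_⟩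
      intro l hl hmem
      obtain ⟨a, rfl⟩ := List.length_eq_one_iff.1 hl
      have : a = 0 := hLie (fun _ => a)
      simp [this]
  | succ m ihm =>
      intro R _ hLie hZ F hF
      by_cases hm0 : m = 0
      · subst hm0
        -- commutative case : all commutators vanish
        have hCS : CS R 1 ⊆ (⊥ : AddSubgroup R) := by
          rintro c ⟨l, x, hl, rfl⟩
          obtain ⟨b, rfl⟩ := List.length_eq_one_iff.1 hl
          have : leftNormedComm 1 (fun i => if i = 0 then x else b) = 0 := hLie _
          simpa [leftNormedComm, dIter, cm] using this
        have hidl : ∀ x ∈ idl (CS R 1), x = 0 := by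
          intro x hx
          have h0 : genOf (CS R 1) ⊆ (⊥ : AddSubgroup R) := by
            rintro z ⟨r, s, c, hc, rfl⟩
            have : c = 0 := by simpa using hCS hc
            simp [this]
          simpa using (AddSubgroup.closure_le ⊥).2 h0 hx
        refine ⟨1, one_pos, ?_⟩
        intro l hl hmem
        obtain ⟨a, rfl⟩ := List.length_eq_one_iff.1 hl
        have := hidl a (hF a (hmem a (by simp)))
        simp [this]
      · -- m ≥ 1
        have hm1 : 1 ≤ m := by omega
        have hZ2 : IsUnit (2 : R) := by
          have := hZ 2 (by norm_num)
          rwa [Int.cast_two] at this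
        set con := idlCon (CS R m) with hcon
        have hLie' : ∀ x : ℕ → con.Quotient, leftNormedComm m x = 0 := by
          intro x
          choose f hf using fun i => idlCon_mk'_surjective (C := CS R m) (x i)
          have hx : x = fun i => con.mk' (f i) := by funext i; rw [hf]
          rw [hx, ← map_lnc con.mk' m f, idlCon_mk'_eq_zero_iff]
          exact mem_idl_of_mem ⟨_, f 0, by simp, lnc_eq_dIter m f⟩
        have hZ' : ∀ k : ℤ, k ≠ 0 → IsUnit ((k : con.Quotient)) := by
          intro k hk
          have := (hZ k hk).map con.mk'
          rwa [map_intCast] at this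
        classical
        obtain ⟨N, hNpos, hN⟩ := ihm con.Quotient hLie' hZ' (F.image con.mk')
          (by
            intro y hy
            obtain ⟨x, hx, rfl⟩ := Finset.mem_image.1 hy
            exact mem_idl_CS_map con.mk' 1 (hF x hx))
        -- every length-N product over F lies in idl (CS R m)
        have key0 : ∀ l : List R, l.length = N → (∀ x ∈ l, x ∈ F) →
            l.prod ∈ idl (CS R m) := by
          intro l hl hmem
          rw [← idlCon_mk'_eq_zero_iff (C := CS R m), map_list_prod]
          refine hN (l.map con.mk') (by simp [hl]) ?_
          intro y hy
          obtain ⟨x, hx, rfl⟩ := List.mem_map.1 hy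
          exact Finset.mem_image_of_mem _ (hmem x hx)
        -- the finite set of length-N products
        set QN : Finset R := Finset.image
          (fun f : Fin N → {x // x ∈ F} => (List.ofFn fun i => ((f i : R))).prod)
          Finset.univ with hQNdef
        have hQN : ∀ q ∈ QN, q ∈ idl (CS R m) := by
          intro q hq
          obtain ⟨f, _, rfl⟩ := Finset.mem_image.1 hq
          refine key0 _ (by simp) ?_
          intro x hx
          obtain ⟨i, hi⟩ := List.mem_ofFn.1 hx
          rw [← hi]; exact (f i).2
        set cfOf : R → Finset R := fun q =>
          if h : q ∈ idl (CS R m) then (exists_finpool h).choose else ∅ with hcfOf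
        set cfstar : Finset R := QN.biUnion cfOf with hcfstar
        have hcf_sub : ∀ z ∈ cfstar, z ∈ CS R m := by
          intro z hz
          obtain ⟨q, hq, hzq⟩ := Finset.mem_biUnion.1 hz
          have h := hQN q hq
          rw [hcfOf] at hzq
          simp only [dif_pos h] at hzq
          exact (exists_finpool h).choose_spec.1 hzq
        have hprops : ∀ z ∈ cfstar, (∀ r : R, z * r = r * z) ∧ z * z = 0 := by
          intro z hz
          obtain ⟨l, x, hl, rfl⟩ := hcf_sub z hz
          constructor
          · intro r
            have := val_central hLie (lcomb x l) (by rw [lcomb_wt, hl]) r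
            rwa [lcomb_val] at this
          · rcases List.eq_nil_or_concat l with rfl | ⟨l', b, rfl⟩
            · simp at hl; omega
            · have hwt : (lcomb x l').wt + (LT.leaf b : LT R).wt = m + 1 := by
                rw [lcomb_wt]
                have h1 : l'.length + 1 = m := by simpa using hl
                show l'.length + 1 + 1 = m + 1
                omega
              have hsq := val_sq_zero hLie hZ2 (lcomb x l') (LT.leaf b) hwt
              rw [lcomb_val] at hsq
              rw [List.concat_eq_append, dIter_concat]
              exact hsq
        have hq_mem : ∀ q ∈ QN, q ∈ idl ((cfstar : Set R)) := by
          intro q hq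
          have h := hQN q hq
          have h1 : q ∈ idl ((cfOf q : Set R)) := by
            rw [hcfOf]; simp only [dif_pos h]
            exact (exists_finpool h).choose_spec.2
          refine idl_mono ?_ h1
          intro x hx
          have : cfOf q ⊆ cfstar := Finset.subset_biUnion_of_mem cfOf hq
          exact_mod_cast this hx
        refine ⟨N * (cfstar.card + 1), by positivity, ?_⟩
        have chunk : ∀ (j : ℕ) (l : List R), (∀ x ∈ l, x ∈ F) → l.length = N * j →
            l.prod ∈ Gp cfstar j := by
          intro j
          induction j with
          | zero =>
              intro l _ hl
              obtain rfl : l = [] := List.length_eq_zero_iff.1 (by simpa using hl)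
              simpa using one_mem_Gp0 cfstar
          | succ j ihj =>
              intro l hmem hl
              have hlen1 : (l.take N).length = N := by
                rw [List.length_take, hl, Nat.mul_succ]; omega
              have hlen2 : (l.drop N).length = N * j := by
                rw [List.length_drop, hl, Nat.mul_succ]; omega
              have hq : (l.take N).prod ∈ QN := by
                obtain ⟨f, hf⟩ := list_eq_ofFn N (l.take N) hlen1
                  (fun x hx => hmem x (List.take_subset N l hx))
                exact Finset.mem_image.2 ⟨f, Finset.mem_univ _, by rw [hf]⟩
              have h1 : (l.take N).prod ∈ idl ((cfstar : Set R)) := hq_mem _ hq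
              have h2 : (l.drop N).prod ∈ Gp cfstar j :=
                ihj (l.drop N) (fun x hx => hmem x (List.drop_subset N l hx)) hlen2
              have := mul_mem_Gp (fun z hz => (hprops z hz).1) h1 h2
              rwa [List.prod_take_mul_prod_drop] at this
        intro l hl hmem
        exact Gp_eq_zero hprops (Nat.lt_succ_self _) (chunk (cfstar.card + 1) l hmem hl)


/-! ### nilpotency consequences of `keyP` -/

lemma nilpotent_of_mem_T {R : Type u} [Ring R] (m : ℕ)
    (hLie : ∀ x : ℕ → R, leftNormedComm m x = 0)
    (hZ : ∀ k : ℤ, k ≠ 0 → IsUnit ((k : R))) {t : R}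
    (ht : t ∈ idl (CS R 1)) : IsNilpotent t := by
  obtain ⟨K, hKpos, hK⟩ := keyP m R hLie hZ {t} (by simpa using ht)
  exact ⟨K, by simpa using hK (List.replicate K t) (by simp) (by simp)⟩

lemma matrix_pow_entries_zero {R : Type u} [Ring R] {n : ℕ} (F : Finset R) {K : ℕ} (hK : 0 < K)
    (h : ∀ l : List R, l.length = K → (∀ x ∈ l, x ∈ F) → l.prod = 0)
    (M : Matrix (Fin n) (Fin n) R) (hM : ∀ i j, M i j ∈ F) : M ^ K = 0 := by
  set P : ℕ → AddSubgroup R := fun k => AddSubgroup.closure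
    {x | ∃ cl : List R, cl.length = k ∧ (∀ c ∈ cl, c ∈ F) ∧ x = cl.prod} with hP
  have hmul : ∀ (j k : ℕ) (a b : R), a ∈ P j → b ∈ P k → a * b ∈ P (j + k) := by
    intro j k a b ha hb
    refine AddSubgroup.closure_induction
      (p := fun a _ => ∀ b ∈ P k, a * b ∈ P (j + k)) ?_ ?_ ?_ ?_ ha b hb
    · rintro z ⟨cl, hlen, hmem, rfl⟩ b hb
      refine AddSubgroup.closure_induction
        (p := fun b _ => cl.prod * b ∈ P (j + k)) ?_ ?_ ?_ ?_ hb
      · rintro w ⟨cl', hlen', hmem', rfl⟩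
        refine AddSubgroup.subset_closure ⟨cl ++ cl', by simp [hlen, hlen'], ?_, ?_⟩
        · intro c hc
          rcases List.mem_append.1 hc with h' | h'
          · exact hmem c h'
          · exact hmem' c h'
        · rw [List.prod_append]
      · show cl.prod * 0 ∈ P (j + k)
        rw [mul_zero]; exact (P (j+k)).zero_mem
      · intro u v _ _ ihu ihv
        show cl.prod * (u + v) ∈ P (j+k)
        rw [mul_add]; exact add_mem ihu ihv
      · intro u _ ihu
        show cl.prod * (-u) ∈ P (j+k)
        rw [mul_neg]; exact neg_mem ihu
    · intro b hb
      show (0:R) * b ∈ P (j+k)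
      rw [zero_mul]; exact (P (j+k)).zero_mem
    · intro u v _ _ ihu ihv b hb
      show (u + v) * b ∈ P (j+k)
      rw [add_mul]; exact add_mem (ihu b hb) (ihv b hb)
    · intro u _ ihu b hb
      show (-u) * b ∈ P (j+k)
      rw [neg_mul]; exact neg_mem (ihu b hb)
  have hpow : ∀ (k : ℕ), 1 ≤ k → ∀ i j, (M ^ k) i j ∈ P k := by
    intro k
    induction k with
    | zero => omega
    | succ k ih =>
        intro _ i j
        by_cases hk0 : k = 0
        · subst hk0
          refine AddSubgroup.subset_closure ⟨[M i j], rfl, ?_, ?_⟩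
          · intro c hc; rw [List.mem_singleton] at hc; subst hc; exact hM i j
          · simp
        · rw [pow_succ, Matrix.mul_apply]
          refine sum_mem (fun t _ => ?_)
          have h1 := ih (by omega) i t
          have h2 : M t j ∈ P 1 :=
            AddSubgroup.subset_closure ⟨[M t j], rfl,
              by intro c hc; rw [List.mem_singleton] at hc; subst hc; exact hM t j, by simp⟩
          exact hmul k 1 _ _ h1 h2
  have hPK : ∀ x ∈ P K, x = 0 := by
    intro x hx
    have h0 : {x : R | ∃ cl : List R, cl.length = K ∧ (∀ c ∈ cl, c ∈ F) ∧ x = cl.prod}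
        ⊆ (⊥ : AddSubgroup R) := by
      rintro x ⟨cl, hlen, hmem, rfl⟩
      simpa using h cl hlen hmem
    simpa using (AddSubgroup.closure_le ⊥).2 h0 hx
  ext i j
  rw [Matrix.zero_apply]
  exact hPK _ (hpow K hK i j)

/-! ### the abelianization -/

def AbQuot (R : Type u) [Ring R] : Type u := (idlCon (CS R 1)).Quotient

instance (R : Type u) [Ring R] : CommRing (AbQuot R) :=
  { (inferInstance : Ring (idlCon (CS R 1)).Quotient) with
    mul_comm := by
      intro a b
      obtain ⟨x, rfl⟩ := idlCon_mk'_surjective (C := CS R 1) a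
      obtain ⟨y, rfl⟩ := idlCon_mk'_surjective (C := CS R 1) b
      show ((x * y : R) : (idlCon (CS R 1)).Quotient) = ((y * x : R) : (idlCon (CS R 1)).Quotient)
      rw [RingCon.eq]
      show x * y - y * x ∈ idl (CS R 1)
      exact mem_idl_of_mem ⟨[y], x, rfl, rfl⟩ }

def abmk (R : Type u) [Ring R] : R →+* AbQuot R := (idlCon (CS R 1)).mk'

lemma abmk_surjective (R : Type u) [Ring R] : Function.Surjective (abmk R) :=
  fun q => idlCon_mk'_surjective (C := CS R 1) q

lemma abmk_eq_zero_iff {R : Type u} [Ring R] (x : R) :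
    abmk R x = 0 ↔ x ∈ idl (CS R 1) := idlCon_mk'_eq_zero_iff x

lemma mapMatrix_smul {R S : Type*} [Ring R] [Ring S] {n : ℕ} (f : R →+* S) (r : R)
    (M : Matrix (Fin n) (Fin n) R) :
    f.mapMatrix (r • M) = f r • f.mapMatrix M := by
  ext i j
  simp [RingHom.mapMatrix_apply, Matrix.map_apply]

end Stmt8Aux

open Stmt8Aux in
/-- Let `m ≥ 1` and let `R` be a ring satisfying the Lie nilpotency identity
`[[[⋯[[x₁,x₂],x₃],⋯],x_m],x_{m+1}] = 0`, in which every nonzero integer is a unit.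
Let `n ≥ 1` and let `S` be a subring of `Mₙ(R)` containing all scalar matrices `r • I`
with `r ∈ R`.  Then every matrix in `S` invertible in `Mₙ(R)` has its inverse in `S`
(i.e. `S ∩ U(Mₙ(R)) = U(S)`). -/
theorem stmt_8 {R : Type*} [Ring R] (m : ℕ) (hm : 1 ≤ m)
    (hLie : ∀ x : ℕ → R, leftNormedComm m x = 0)
    (hZ : ∀ k : ℤ, k ≠ 0 → IsUnit (k : R))
    (n : ℕ) (hn : 1 ≤ n)
    (S : Subring (Matrix (Fin n) (Fin n) R))
    (hscal : ∀ r : R, r • (1 : Matrix (Fin n) (Fin n) R) ∈ S)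
    (A : (Matrix (Fin n) (Fin n) R)ˣ) (hA : A.val ∈ S) :
    (A⁻¹).val ∈ S := by
  classical
  by_cases htriv : (0 : R) = 1
  · haveI : Subsingleton R := subsingleton_of_zero_eq_one htriv
    have : (A⁻¹).val = A.val := Subsingleton.elim _ _
    rw [this]; exact hA
  -- notation
  set T := idl (CS R 1) with hT
  haveI hQnt : Nontrivial (AbQuot R) := by
    refine ⟨0, 1, fun h => htriv ?_⟩
    have h1 : (1 : R) ∈ T := by
      rw [← abmk_eq_zero_iff, map_one]
      exact h.symm
    obtain ⟨K, hKpos, hK⟩ := keyP m R hLie hZ {1} (by simpa using h1)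
    have := hK (List.replicate K 1) (by simp) (by simp)
    simpa using this.symm
  set mmk := (abmk R).mapMatrix (m := Fin n) with hmmk
  set Abar := mmk A.val with hAbar
  have hAunit : IsUnit Abar := IsUnit.map mmk ⟨A, rfl⟩
  have hdet : IsUnit Abar.det := (Matrix.isUnit_iff_isUnit_det Abar).1 hAunit
  set p := Abar.charpoly with hp
  have hdeg : p.natDegree = n := by
    rw [hp, Matrix.charpoly_natDegree_eq_dim, Fintype.card_fin]
  have hc0 : IsUnit (p.coeff 0) := by
    have hd := Matrix.det_eq_sign_charpoly_coeff Abar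
    have h2 : p.coeff 0 = (-1 : AbQuot R) ^ Fintype.card (Fin n) * Abar.det := by
      rw [hd, ← mul_assoc, ← pow_add,
        Even.neg_one_pow ⟨Fintype.card (Fin n), rfl⟩, one_mul, hp]
    rw [h2]
    exact ((isUnit_one.neg).pow _).mul hdet
  have hCH : ∑ i ∈ Finset.range (n + 1), p.coeff i • Abar ^ i = 0 := by
    have h := Matrix.aeval_self_charpoly Abar
    rwa [Polynomial.aeval_eq_sum_range' (n := n + 1) (by rw [hdeg]; omega)] at h
  -- lift coefficients
  have hs := abmk_surjective R
  set ρ : ℕ → R := fun i => (hs (p.coeff i)).choose with hρdef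
  have hρ : ∀ i, abmk R (ρ i) = p.coeff i := fun i => (hs (p.coeff i)).choose_spec
  set B : Matrix (Fin n) (Fin n) R := ∑ i ∈ Finset.range n, ρ (i + 1) • A.val ^ i with hB
  have hsmul_mem : ∀ (r : R) (X : Matrix (Fin n) (Fin n) R), X ∈ S → r • X ∈ S := by
    intro r X hX
    have : r • X = (r • (1 : Matrix (Fin n) (Fin n) R)) * X := by
      rw [smul_mul_assoc, one_mul]
    rw [this]; exact S.mul_mem (hscal r) hX
  have hBS : B ∈ S := sum_mem (fun i _ => hsmul_mem _ _ (S.pow_mem hA i))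
  have hmapB : mmk B = ∑ i ∈ Finset.range n, p.coeff (i + 1) • Abar ^ i := by
    rw [hB, map_sum]
    refine Finset.sum_congr rfl (fun i _ => ?_)
    rw [mapMatrix_smul, hρ, map_pow, ← hAbar]
  have hkey : Abar * mmk B = (-(p.coeff 0)) • 1 := by
    rw [hmapB, show Abar * ∑ i ∈ Finset.range n, p.coeff (i + 1) • Abar ^ i = ∑ i ∈ Finset.range n, Abar * (p.coeff (i + 1) • Abar ^ i) from Finset.mul_sum _ _ _]
    have e1 : ∀ i, Abar * (p.coeff (i+1) • Abar ^ i) = p.coeff (i+1) • Abar ^ (i+1) := by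
      intro i; rw [mul_smul_comm, ← pow_succ']
    simp_rw [e1]
    have h2 := hCH
    rw [Finset.sum_range_succ'] at h2
    have h3 : ∑ i ∈ Finset.range n, p.coeff (i+1) • Abar ^ (i+1) = -(p.coeff 0 • Abar ^ 0) :=
      eq_neg_of_add_eq_zero_left h2
    rw [h3, pow_zero, neg_smul]
  set D := A.val * B with hD
  set E := D + ρ 0 • (1 : Matrix (Fin n) (Fin n) R) with hE
  have hES : E ∈ S := S.add_mem (S.mul_mem hA hBS) (hscal _)
  have hmapE : mmk E = 0 := by
    rw [hE, map_add, hD, map_mul, ← hAbar, hkey, mapMatrix_smul, hρ, map_one, neg_smul]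
    abel
  have hET : ∀ i j, E i j ∈ T := by
    intro i j
    rw [hT, ← abmk_eq_zero_iff]
    have h1 : (mmk E) i j = 0 := by rw [hmapE]; rfl
    rwa [hmmk, RingHom.mapMatrix_apply, Matrix.map_apply] at h1
  -- ρ 0 is a unit
  have hρ0 : IsUnit (ρ 0) := by
    obtain ⟨u, hu⟩ := hc0
    obtain ⟨w, hw⟩ := hs ((u⁻¹ : (AbQuot R)ˣ) : AbQuot R)
    have h1 : abmk R (ρ 0 * w) = 1 := by
      rw [map_mul, hρ 0, hw, ← hu, Units.mul_inv]
    have h2 : abmk R (w * ρ 0) = 1 := by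
      rw [map_mul, hρ 0, hw, ← hu, Units.inv_mul]
    have hnil1 : IsNilpotent (ρ 0 * w - 1) := by
      refine nilpotent_of_mem_T m hLie hZ ?_
      rw [← abmk_eq_zero_iff, map_sub, h1, map_one, sub_self]
    have hnil2 : IsNilpotent (w * ρ 0 - 1) := by
      refine nilpotent_of_mem_T m hLie hZ ?_
      rw [← abmk_eq_zero_iff, map_sub, h2, map_one, sub_self]
    have hu1 : IsUnit (ρ 0 * w) := by
      have := hnil1.isUnit_one_add
      rwa [show (1 : R) + (ρ 0 * w - 1) = ρ 0 * w by abel] at this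
    have hu2 : IsUnit (w * ρ 0) := by
      have := hnil2.isUnit_one_add
      rwa [show (1 : R) + (w * ρ 0 - 1) = w * ρ 0 by abel] at this
    obtain ⟨v1, hv1⟩ := hu1
    obtain ⟨v2, hv2⟩ := hu2
    have hr : ρ 0 * (w * ↑v1⁻¹) = 1 := by
      rw [← mul_assoc, ← hv1, Units.mul_inv]
    have hl : (↑v2⁻¹ * w) * ρ 0 = 1 := by
      rw [mul_assoc, ← hv2, Units.inv_mul]
    have heq : (↑v2⁻¹ * w : R) = w * ↑v1⁻¹ := by
      calc (↑v2⁻¹ * w : R) = (↑v2⁻¹ * w) * (ρ 0 * (w * ↑v1⁻¹)) := by rw [hr, mul_one]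
        _ = ((↑v2⁻¹ * w) * ρ 0) * (w * ↑v1⁻¹) :=
              (mul_assoc (↑v2⁻¹ * w) (ρ 0) (w * ↑v1⁻¹)).symm
        _ = w * ↑v1⁻¹ := by rw [hl, one_mul]
    exact ⟨⟨ρ 0, w * ↑v1⁻¹, hr, by rw [← heq]; exact hl⟩, rfl⟩
  set υ := hρ0.unit with hυ
  have hυval : (↑υ : R) = ρ 0 := hρ0.unit_spec
  set M0inv : Matrix (Fin n) (Fin n) R := (-(↑υ⁻¹ : R)) • 1 with hM0inv
  set E' := M0inv * E with hE'
  have hE'S : E' ∈ S := S.mul_mem (hscal _) hES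
  have hE'T : ∀ i j, E' i j ∈ T := by
    intro i j
    have h1 : E' i j = (-(↑υ⁻¹ : R)) * E i j := by
      rw [hE', hM0inv, smul_mul_assoc, one_mul, Matrix.smul_apply, smul_eq_mul]
    rw [h1]
    exact idl_mul_left _ (hET i j)
  set F : Finset R := Finset.image (fun pr : Fin n × Fin n => E' pr.1 pr.2) Finset.univ with hF
  obtain ⟨K, hKpos, hK⟩ := keyP m R hLie hZ F (by
    intro x hx
    obtain ⟨pr, _, rfl⟩ := Finset.mem_image.1 hx
    exact hE'T pr.1 pr.2)
  have hE'K : E' ^ K = 0 := matrix_pow_entries_zero F hKpos hK E'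
    (fun i j => Finset.mem_image.2 ⟨(i, j), Finset.mem_univ _, rfl⟩)
  set G := ∑ k ∈ Finset.range K, (-E') ^ k with hG
  have hGS : G ∈ S := sum_mem (fun k _ => S.pow_mem (S.neg_mem hE'S) k)
  have hnegpow : (-E') ^ K = 0 := by rw [neg_pow, hE'K, mul_zero]
  have hG2 : (1 + E') * G = 1 := by
    have h := mul_geom_sum (-E') K
    rw [hnegpow, zero_sub] at h
    have h2 : (-(1 + E')) * G = -1 := by
      rw [show -(1 + E') = -E' - 1 by abel]; exact h
    rw [neg_mul] at h2
    exact neg_injective h2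
  have hM0M : ((-(ρ 0)) • (1 : Matrix (Fin n) (Fin n) R)) * M0inv = 1 := by
    rw [hM0inv, smul_mul_assoc, one_mul, smul_smul, neg_mul_neg, ← hυval, Units.mul_inv,
      one_smul]
  have hDfact : A.val * B = ((-(ρ 0)) • (1 : Matrix (Fin n) (Fin n) R)) * (1 + E') := by
    rw [mul_add, mul_one, hE', ← mul_assoc, hM0M, one_mul, hE, hD, neg_smul]
    abel
  have hfinal : A.val * (B * (G * M0inv)) = 1 := by
    rw [← mul_assoc, hDfact, mul_assoc _ (1 + E') (G * M0inv), ← mul_assoc (1 + E') G M0inv,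
      hG2, one_mul, hM0M]
  have hAA : (A⁻¹).val * A.val = 1 := A.inv_mul
  have hx : (A⁻¹).val = B * (G * M0inv) := by
    calc (A⁻¹).val = (A⁻¹).val * (A.val * (B * (G * M0inv))) := by rw [hfinal, mul_one]
      _ = ((A⁻¹).val * A.val) * (B * (G * M0inv)) := by rw [mul_assoc]
      _ = B * (G * M0inv) := by rw [hAA, one_mul]
  rw [hx]
  exact S.mul_mem hBS (S.mul_mem hGS (hscal _))
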